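/- The point (0,0) is a fixed point of F_η; the Jacobian of F_η at (0,0) equals the 2×2 real matrix [[1, −η n_e (x_s−x_t)/2], [η n_d (x_s−x_t)/2, 1 − η² n_e n_d (x_s−x_t)²/4]]; setting α = (η/2)√(n_e n_d)·|x_s − x_t|, its complex eigenvalues are λ = 1 − α²/2 ± √((1 − α²/2)² − 1) with product equal to 1; and both eigenvalues have modulus exactly 1 if and only if η ≤ 4/(√(n_e n_d)·|x_s − x_t|) (equivalently α ≤ 2), while some eigenvalue has modulus strictly greater than 1 otherwise. -/

import Mathlib

open Real

noncomputable def Sg (t : ℝ) : ℝ := Real.exp (-t) / (1 + Real.exp (-t))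

noncomputable def Lm (a b c d : ℝ) : ℝ × ℝ →L[ℝ] ℝ × ℝ :=
  (a • ContinuousLinearMap.fst ℝ ℝ ℝ + b • ContinuousLinearMap.snd ℝ ℝ ℝ).prod
  (c • ContinuousLinearMap.fst ℝ ℝ ℝ + d • ContinuousLinearMap.snd ℝ ℝ ℝ)

lemma Lm_apply (a b c d : ℝ) (v : ℝ × ℝ) :
    Lm a b c d v = (a*v.1 + b*v.2, c*v.1 + d*v.2) := by simp [Lm, smul_eq_mul]

lemma Lm_mul (a b c d a' b' c' d' : ℝ) :
    Lm a b c d * Lm a' b' c' d'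
      = Lm (a*a'+b*c') (a*b'+b*d') (c*a'+d*c') (c*b'+d*d') := by
  refine ContinuousLinearMap.ext fun v => ?_
  rw [ContinuousLinearMap.mul_apply]
  simp only [Lm_apply]
  rw [Prod.mk.injEq]; constructor <;> ring

lemma Lm_id : Lm 1 0 0 1 = 1 := by
  refine ContinuousLinearMap.ext fun v => ?_
  simp [Lm_apply]

lemma hf4 (t : ℝ) : HasDerivAt (fun u => Real.log (1 / (1 + Real.exp (-u)))) (Sg t) t := by
  have h1 : ∀ u : ℝ, Real.log (1 / (1 + Real.exp (-u))) = -Real.log (1 + Real.exp (-u)) := by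
    intro u; rw [one_div, Real.log_inv]
  simp only [h1]
  have hexp : HasDerivAt (fun u : ℝ => 1 + Real.exp (-u)) (-Real.exp (-t)) t := by
    have := ((Real.hasDerivAt_exp (-t)).comp t (hasDerivAt_neg t)).const_add 1
    simpa using this
  have hpos : (1 : ℝ) + Real.exp (-t) ≠ 0 := by positivity
  have := (hexp.log hpos).neg
  simpa [Sg, neg_div, Pi.neg_def] using this

lemma hderiv1 (xs xt θd θe : ℝ) :
    HasDerivAt (fun a => Real.log (1 / (1 + Real.exp (-(θd*a*xs))))
        + Real.log (1 / (1 + Real.exp (-(-(θd*a*xt))))))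
      (Sg (θd*θe*xs) * (θd*xs) + Sg (-(θd*θe*xt)) * (-(θd*xt))) θe := by
  have h1 : HasDerivAt (fun a : ℝ => θd*a*xs) (θd*xs) θe := by
    have he : (fun a : ℝ => θd*a*xs) = fun a => (θd*xs)*a := by funext a; ring
    rw [he]; simpa using (hasDerivAt_id θe).const_mul (θd*xs)
  have h2 : HasDerivAt (fun a : ℝ => -(θd*a*xt)) (-(θd*xt)) θe := by
    have he : (fun a : ℝ => -(θd*a*xt)) = fun a => (-(θd*xt))*a := by funext a; ring
    rw [he]; simpa using (hasDerivAt_id θe).const_mul (-(θd*xt))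
  exact ((hf4 (θd*θe*xs)).comp θe h1).add ((hf4 (-(θd*θe*xt))).comp θe h2)

lemma hderiv2 (xs xt θe θd : ℝ) :
    HasDerivAt (fun b => Real.log (1 / (1 + Real.exp (-(b*θe*xs))))
        + Real.log (1 / (1 + Real.exp (-(-(b*θe*xt))))))
      (Sg (θd*θe*xs) * (θe*xs) + Sg (-(θd*θe*xt)) * (-(θe*xt))) θd := by
  have h1 : HasDerivAt (fun b : ℝ => b*θe*xs) (θe*xs) θd := by
    have he : (fun b : ℝ => b*θe*xs) = fun b => (θe*xs)*b := by funext b; ring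
    rw [he]; simpa using (hasDerivAt_id θd).const_mul (θe*xs)
  have h2 : HasDerivAt (fun b : ℝ => -(b*θe*xt)) (-(θe*xt)) θd := by
    have he : (fun b : ℝ => -(b*θe*xt)) = fun b => (-(θe*xt))*b := by funext b; ring
    rw [he]; simpa using (hasDerivAt_id θd).const_mul (-(θe*xt))
  exact ((hf4 (θd*θe*xs)).comp θd h1).add ((hf4 (-(θd*θe*xt))).comp θd h2)

lemma S_hasDerivAt_zero : ∃ s0 : ℝ, HasDerivAt Sg s0 0 := by
  have hnum : HasDerivAt (fun u : ℝ => Real.exp (-u)) (-Real.exp (-(0:ℝ))) 0 := by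
    have := (Real.hasDerivAt_exp (-(0:ℝ))).comp 0 (hasDerivAt_neg (0:ℝ))
    simpa [Function.comp_def] using this
  have hden : HasDerivAt (fun u : ℝ => 1 + Real.exp (-u)) (-Real.exp (-(0:ℝ))) 0 :=
    hnum.const_add 1
  have hd0 : (1 : ℝ) + Real.exp (-(0:ℝ)) ≠ 0 := by positivity
  exact ⟨_, hnum.div hden hd0⟩

lemma hG1' (xs xt η : ℝ) :
    HasFDerivAt (fun θ : ℝ × ℝ =>
        (θ.1 - η * (Sg (θ.2*θ.1*xs) * (θ.2*xs) + Sg (-(θ.2*θ.1*xt)) * (-(θ.2*xt))), θ.2))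
      (Lm 1 (-(η*((xs-xt)/2))) 0 1) ((0:ℝ),(0:ℝ)) := by
  obtain ⟨s0, hs0⟩ := S_hasDerivAt_zero
  set p : ℝ × ℝ := ((0:ℝ),(0:ℝ)) with hp
  have hq1 := ((hasFDerivAt_snd (𝕜 := ℝ) (E := ℝ) (F := ℝ) (p := p)).mul
      (hasFDerivAt_fst (𝕜 := ℝ) (E := ℝ) (F := ℝ) (p := p))).mul_const xs
  have hS1 : HasDerivAt Sg s0 ((fun θ : ℝ × ℝ => θ.2*θ.1*xs) p) := by simpa [hp] using hs0
  have hc1 := hS1.comp_hasFDerivAt p hq1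
  have hlin1 := (hasFDerivAt_snd (𝕜 := ℝ) (E := ℝ) (F := ℝ) (p := p)).mul_const xs
  have hterm1 := hc1.mul hlin1
  have hq2 := (((hasFDerivAt_snd (𝕜 := ℝ) (E := ℝ) (F := ℝ) (p := p)).mul
      (hasFDerivAt_fst (𝕜 := ℝ) (E := ℝ) (F := ℝ) (p := p))).mul_const xt).neg
  have hS2 : HasDerivAt Sg s0 ((fun θ : ℝ × ℝ => -(θ.2*θ.1*xt)) p) := by simpa [hp] using hs0
  have hc2 := hS2.comp_hasFDerivAt p hq2
  have hlin2 := ((hasFDerivAt_snd (𝕜 := ℝ) (E := ℝ) (F := ℝ) (p := p)).mul_const xt).neg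
  have hterm2 := hc2.mul hlin2
  have hg := hterm1.add hterm2
  have hG := ((hasFDerivAt_fst (𝕜 := ℝ) (E := ℝ) (F := ℝ) (p := p)).sub
      (hg.const_mul η)).prodMk (hasFDerivAt_snd (𝕜 := ℝ) (E := ℝ) (F := ℝ) (p := p))
  refine hG.congr_fderiv ?_
  refine ContinuousLinearMap.ext fun v => ?_
  simp [Lm, Sg, hp, Real.exp_zero]
  ring

lemma hG2' (xs xt η : ℝ) :
    HasFDerivAt (fun θ : ℝ × ℝ =>
        (θ.1, θ.2 + η * (Sg (θ.2*θ.1*xs) * (θ.1*xs) + Sg (-(θ.2*θ.1*xt)) * (-(θ.1*xt)))))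
      (Lm 1 0 (η*((xs-xt)/2)) 1) ((0:ℝ),(0:ℝ)) := by
  obtain ⟨s0, hs0⟩ := S_hasDerivAt_zero
  set p : ℝ × ℝ := ((0:ℝ),(0:ℝ)) with hp
  have hq1 := ((hasFDerivAt_snd (𝕜 := ℝ) (E := ℝ) (F := ℝ) (p := p)).mul
      (hasFDerivAt_fst (𝕜 := ℝ) (E := ℝ) (F := ℝ) (p := p))).mul_const xs
  have hS1 : HasDerivAt Sg s0 ((fun θ : ℝ × ℝ => θ.2*θ.1*xs) p) := by simpa [hp] using hs0
  have hc1 := hS1.comp_hasFDerivAt p hq1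
  have hlin1 := (hasFDerivAt_fst (𝕜 := ℝ) (E := ℝ) (F := ℝ) (p := p)).mul_const xs
  have hterm1 := hc1.mul hlin1
  have hq2 := (((hasFDerivAt_snd (𝕜 := ℝ) (E := ℝ) (F := ℝ) (p := p)).mul
      (hasFDerivAt_fst (𝕜 := ℝ) (E := ℝ) (F := ℝ) (p := p))).mul_const xt).neg
  have hS2 : HasDerivAt Sg s0 ((fun θ : ℝ × ℝ => -(θ.2*θ.1*xt)) p) := by simpa [hp] using hs0
  have hc2 := hS2.comp_hasFDerivAt p hq2
  have hlin2 := ((hasFDerivAt_fst (𝕜 := ℝ) (E := ℝ) (F := ℝ) (p := p)).mul_const xt).neg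
  have hterm2 := hc2.mul hlin2
  have hg := hterm1.add hterm2
  have hG := (hasFDerivAt_fst (𝕜 := ℝ) (E := ℝ) (F := ℝ) (p := p)).prodMk
      ((hasFDerivAt_snd (𝕜 := ℝ) (E := ℝ) (F := ℝ) (p := p)).add (hg.const_mul η))
  refine hG.congr_fderiv ?_
  refine ContinuousLinearMap.ext fun v => ?_
  simp [Lm, Sg, hp, Real.exp_zero]
  ring

lemma iter_fd {G : ℝ × ℝ → ℝ × ℝ} {L : ℝ × ℝ →L[ℝ] ℝ × ℝ} (h0 : G (0,0) = (0,0))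
    (hG : HasFDerivAt G L (0,0)) : ∀ n : ℕ, HasFDerivAt (G^[n]) (L^n) ((0:ℝ),(0:ℝ))
  | 0 => by
      simpa [Function.iterate_zero, pow_zero, ContinuousLinearMap.one_def]
        using hasFDerivAt_id ((0:ℝ),(0:ℝ))
  | (n+1) => by
      have hfix : G^[n] (0,0) = (0,0) := Function.iterate_fixed h0 n
      have hGn : HasFDerivAt G L (G^[n] (0,0)) := by rw [hfix]; exact hG
      have hcomp := hGn.comp ((0:ℝ),(0:ℝ)) (iter_fd h0 hG n)
      rw [Function.iterate_succ', pow_succ']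
      exact hcomp

lemma Lm_pow_upper (b : ℝ) : ∀ n : ℕ, (Lm 1 b 0 1)^n = Lm 1 (n*b) 0 1
  | 0 => by simp [pow_zero, Lm_id.symm]
  | (n+1) => by
      rw [pow_succ, Lm_pow_upper b n, Lm_mul]
      push_cast; ring_nf

lemma Lm_pow_lower (c : ℝ) : ∀ n : ℕ, (Lm 1 0 c 1)^n = Lm 1 0 (n*c) 1
  | 0 => by simp [pow_zero, Lm_id.symm]
  | (n+1) => by
      rw [pow_succ, Lm_pow_lower c n, Lm_mul]
      push_cast; ring_nf

lemma spec2 (M : Matrix (Fin 2) (Fin 2) ℂ) (μ : ℂ) :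
    μ ∈ spectrum ℂ M ↔ (μ - M 0 0) * (μ - M 1 1) - M 0 1 * M 1 0 = 0 := by
  rw [spectrum.mem_iff, Matrix.isUnit_iff_isUnit_det, isUnit_iff_ne_zero, not_ne_iff,
    Matrix.det_fin_two]
  simp only [Matrix.sub_apply, Matrix.algebraMap_matrix_apply]
  norm_num

set_option maxHeartbeats 1000000 in
theorem stmt14 (xs xt : ℝ) (hx : xs ≠ xt) (η : ℝ) (hη : 0 < η)
    (ne nd : ℕ) (hne : 1 ≤ ne) (hnd : 1 ≤ nd) :
    let f : ℝ → ℝ := fun t => Real.log (1 / (1 + Real.exp (-t)))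
    let d : ℝ → ℝ → ℝ := fun θe θd => f (θd * θe * xs) + f (-(θd * θe * xt))
    let F1 : ℝ × ℝ → ℝ × ℝ := fun θ => (θ.1 - η * deriv (fun a => d a θ.2) θ.1, θ.2)
    let F2 : ℝ × ℝ → ℝ × ℝ := fun θ => (θ.1, θ.2 + η * deriv (fun b => d θ.1 b) θ.2)
    let F : ℝ × ℝ → ℝ × ℝ := (F2^[nd]) ∘ (F1^[ne])
    let J : Matrix (Fin 2) (Fin 2) ℝ :=
      !![1, -(η * (ne : ℝ) * (xs - xt) / 2);
         η * (nd : ℝ) * (xs - xt) / 2,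
         1 - η ^ 2 * (ne : ℝ) * (nd : ℝ) * (xs - xt) ^ 2 / 4]
    let Jc : Matrix (Fin 2) (Fin 2) ℂ := J.map (fun a => (a : ℂ))
    let α : ℝ := η / 2 * Real.sqrt ((ne : ℝ) * (nd : ℝ)) * |xs - xt|
    F (0, 0) = (0, 0) ∧
    (∀ v : ℝ × ℝ, fderiv ℝ F (0, 0) v
        = (J 0 0 * v.1 + J 0 1 * v.2, J 1 0 * v.1 + J 1 1 * v.2)) ∧
    (∃ w : ℂ, w ^ 2 = ((1 - α ^ 2 / 2 : ℝ) : ℂ) ^ 2 - 1 ∧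
      spectrum ℂ Jc = {((1 - α ^ 2 / 2 : ℝ) : ℂ) + w, ((1 - α ^ 2 / 2 : ℝ) : ℂ) - w} ∧
      (((1 - α ^ 2 / 2 : ℝ) : ℂ) + w) * (((1 - α ^ 2 / 2 : ℝ) : ℂ) - w) = 1) ∧
    ((∀ μ ∈ spectrum ℂ Jc, ‖μ‖ = 1) ↔
        η ≤ 4 / (Real.sqrt ((ne : ℝ) * (nd : ℝ)) * |xs - xt|)) ∧
    (¬ η ≤ 4 / (Real.sqrt ((ne : ℝ) * (nd : ℝ)) * |xs - xt|) →
        ∃ μ ∈ spectrum ℂ Jc, 1 < ‖μ‖) := by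
  intro f d F1 F2 F J Jc α
  -- rewrite F1, F2 as explicit smooth maps
  have hd1 : ∀ θ : ℝ × ℝ, deriv (fun a => d a θ.2) θ.1
      = Sg (θ.2*θ.1*xs) * (θ.2*xs) + Sg (-(θ.2*θ.1*xt)) * (-(θ.2*xt)) :=
    fun θ => (hderiv1 xs xt θ.2 θ.1).deriv
  have hd2 : ∀ θ : ℝ × ℝ, deriv (fun b => d θ.1 b) θ.2
      = Sg (θ.2*θ.1*xs) * (θ.1*xs) + Sg (-(θ.2*θ.1*xt)) * (-(θ.1*xt)) :=
    fun θ => (hderiv2 xs xt θ.1 θ.2).deriv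
  set G1 : ℝ × ℝ → ℝ × ℝ := fun θ =>
    (θ.1 - η * (Sg (θ.2*θ.1*xs) * (θ.2*xs) + Sg (-(θ.2*θ.1*xt)) * (-(θ.2*xt))), θ.2) with hG1def
  set G2 : ℝ × ℝ → ℝ × ℝ := fun θ =>
    (θ.1, θ.2 + η * (Sg (θ.2*θ.1*xs) * (θ.1*xs) + Sg (-(θ.2*θ.1*xt)) * (-(θ.1*xt)))) with hG2def
  have hF1 : F1 = G1 := by funext θ; simp only [F1, hG1def, hd1 θ]
  have hF2 : F2 = G2 := by funext θ; simp only [F2, hG2def, hd2 θ]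
  have hF : F = (G2^[nd]) ∘ (G1^[ne]) := by simp only [F, hF1, hF2]
  have h10 : G1 (0,0) = (0,0) := by simp [hG1def]
  have h20 : G2 (0,0) = (0,0) := by simp [hG2def]
  -- constants
  have hxx : (0:ℝ) < |xs - xt| := abs_pos.mpr (sub_ne_zero.mpr hx)
  have hnn : (0:ℝ) < (ne : ℝ) * (nd : ℝ) := by
    have h1 : (0:ℝ) < (ne : ℝ) := by exact_mod_cast Nat.lt_of_lt_of_le Nat.zero_lt_one hne
    have h2 : (0:ℝ) < (nd : ℝ) := by exact_mod_cast Nat.lt_of_lt_of_le Nat.zero_lt_one hnd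
    exact mul_pos h1 h2
  have hsq : (0:ℝ) < Real.sqrt ((ne : ℝ) * (nd : ℝ)) := Real.sqrt_pos.mpr hnn
  have hk : (0:ℝ) < Real.sqrt ((ne : ℝ) * (nd : ℝ)) * |xs - xt| := mul_pos hsq hxx
  have hαpos : 0 < α := by
    have : α = η / 2 * (Real.sqrt ((ne : ℝ) * (nd : ℝ)) * |xs - xt|) := by
      simp only [α]; ring
    rw [this]; positivity
  have hα2 : α ^ 2 = η ^ 2 * (ne : ℝ) * (nd : ℝ) * (xs - xt) ^ 2 / 4 := by
    simp only [α]
    rw [mul_pow, mul_pow, Real.sq_sqrt hnn.le, sq_abs]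
    ring
  have hiff : η ≤ 4 / (Real.sqrt ((ne : ℝ) * (nd : ℝ)) * |xs - xt|) ↔ α ≤ 2 := by
    rw [le_div_iff₀ hk]
    have hαk : α = η * (Real.sqrt ((ne : ℝ) * (nd : ℝ)) * |xs - xt|) / 2 := by
      simp only [α]; ring
    constructor <;> intro h <;> nlinarith [hαk]
  -- part 1 : fixed point
  have hfix1 : G1^[ne] (0,0) = (0,0) := Function.iterate_fixed h10 ne
  have hfix2 : G2^[nd] (0,0) = (0,0) := Function.iterate_fixed h20 nd
  have part1 : F (0,0) = (0,0) := by
    rw [hF]; simp only [Function.comp_apply, hfix1, hfix2]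
  -- part 2 : Jacobian
  have hAn := iter_fd h10 (hG1' xs xt η) ne
  have hBn := iter_fd h20 (hG2' xs xt η) nd
  have hBn' : HasFDerivAt (G2^[nd]) ((Lm 1 0 (η*((xs-xt)/2)) 1)^nd) (G1^[ne] (0,0)) := by
    rw [hfix1]; exact hBn
  have hcomp := hBn'.comp ((0:ℝ),(0:ℝ)) hAn
  rw [Lm_pow_lower, Lm_pow_upper, ← ContinuousLinearMap.mul_def, Lm_mul] at hcomp
  have hFfd : HasFDerivAt F _ ((0:ℝ),(0:ℝ)) := hF ▸ hcomp
  have part2 : ∀ v : ℝ × ℝ, fderiv ℝ F (0, 0) v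
      = (J 0 0 * v.1 + J 0 1 * v.2, J 1 0 * v.1 + J 1 1 * v.2) := by
    intro v
    rw [hFfd.fderiv, Lm_apply]
    simp only [J, Matrix.cons_val', Matrix.cons_val_zero, Matrix.cons_val_one,
      Matrix.head_cons, Matrix.head_fin_const, Matrix.empty_val', Matrix.cons_val_fin_one,
      Matrix.of_apply]
    rw [Prod.mk.injEq]
    constructor <;> push_cast <;> ring
  -- entries of Jc
  have e00 : Jc 0 0 = 1 := by
    simp [Jc, J, Matrix.map_apply]
  have e01 : Jc 0 1 = ((-(η * (ne : ℝ) * (xs - xt) / 2) : ℝ) : ℂ) := by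
    simp [Jc, J, Matrix.map_apply]
  have e10 : Jc 1 0 = ((η * (nd : ℝ) * (xs - xt) / 2 : ℝ) : ℂ) := by
    simp [Jc, J, Matrix.map_apply]
  have e11 : Jc 1 1 = ((1 - η ^ 2 * (ne : ℝ) * (nd : ℝ) * (xs - xt) ^ 2 / 4 : ℝ) : ℂ) := by
    simp [Jc, J, Matrix.map_apply]
  -- the square root w
  set sR : ℝ := 1 - α ^ 2 / 2 with hsRdef
  have hA : ((α : ℂ)) ^ 2 = (η:ℂ) ^ 2 * (ne:ℂ) * (nd:ℂ) * ((xs:ℂ) - (xt:ℂ)) ^ 2 / 4 := by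
    have := congrArg (fun r : ℝ => (r : ℂ)) hα2
    push_cast at this
    exact this
  set w : ℂ := if α ≤ 2 then Complex.I * ((Real.sqrt (1 - sR ^ 2) : ℝ) : ℂ)
    else ((Real.sqrt (sR ^ 2 - 1) : ℝ) : ℂ) with hwdef
  have hw : w ^ 2 = ((sR : ℝ) : ℂ) ^ 2 - 1 := by
    by_cases hle : α ≤ 2
    · have hu4 : α ^ 2 ≤ 4 := by nlinarith
      have h1 : sR ^ 2 ≤ 1 := by
        rw [hsRdef]
        nlinarith [mul_nonneg (sq_nonneg α) (by linarith : (0:ℝ) ≤ 4 - α ^ 2)]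
      rw [hwdef, if_pos hle, mul_pow, Complex.I_sq, ← Complex.ofReal_pow,
        Real.sq_sqrt (by linarith)]
      push_cast; ring
    · push_neg at hle
      have hu4 : 4 < α ^ 2 := by nlinarith
      have hs1 : sR < -1 := by rw [hsRdef]; linarith
      have h1 : 1 ≤ sR ^ 2 := by
        nlinarith [mul_pos (by linarith : (0:ℝ) < -1 - sR) (by linarith : (0:ℝ) < 1 - sR)]
      rw [hwdef, if_neg (by push_neg; exact hle), ← Complex.ofReal_pow,
        Real.sq_sqrt (by linarith)]
      push_cast; ring
  have hsC : ((1 - α ^ 2 / 2 : ℝ) : ℂ) = ((sR : ℝ) : ℂ) := by rw [hsRdef]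
  -- factorization and spectrum
  have hfactor : ∀ μ : ℂ, (μ - Jc 0 0) * (μ - Jc 1 1) - Jc 0 1 * Jc 1 0
      = (μ - (((sR : ℝ) : ℂ) + w)) * (μ - (((sR : ℝ) : ℂ) - w)) := by
    intro μ
    have hsC2 : ((sR : ℝ) : ℂ) = 1 - ((α : ℝ) : ℂ) ^ 2 / 2 := by
      rw [hsRdef]; push_cast; ring
    rw [e00, e01, e10, e11]
    push_cast
    linear_combination hw - μ * hA + 2 * μ * hsC2
  have hspec : spectrum ℂ Jc = {((sR : ℝ) : ℂ) + w, ((sR : ℝ) : ℂ) - w} := by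
    ext μ
    rw [spec2, hfactor μ, mul_eq_zero, sub_eq_zero, sub_eq_zero,
      Set.mem_insert_iff, Set.mem_singleton_iff]
  have hprod : (((sR : ℝ) : ℂ) + w) * (((sR : ℝ) : ℂ) - w) = 1 := by
    linear_combination -hw
  -- moduli
  have habs_le : α ≤ 2 → ∀ μ ∈ spectrum ℂ Jc, ‖μ‖ = 1 := by
    intro hle μ hμ
    have hu4 : α ^ 2 ≤ 4 := by nlinarith
    have h1 : sR ^ 2 ≤ 1 := by
      rw [hsRdef]
      nlinarith [mul_nonneg (sq_nonneg α) (by linarith : (0:ℝ) ≤ 4 - α ^ 2)]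
    have ht : Real.sqrt (1 - sR ^ 2) ^ 2 = 1 - sR ^ 2 := Real.sq_sqrt (by linarith)
    rw [hspec, Set.mem_insert_iff, Set.mem_singleton_iff] at hμ
    have hwval : w = Complex.I * ((Real.sqrt (1 - sR ^ 2) : ℝ) : ℂ) := by
      rw [hwdef, if_pos hle]
    rcases hμ with h | h
    · rw [h, hwval]
      have : ((sR : ℝ) : ℂ) + Complex.I * ((Real.sqrt (1 - sR ^ 2) : ℝ) : ℂ)
          = ((sR : ℝ) : ℂ) + ((Real.sqrt (1 - sR ^ 2) : ℝ) : ℂ) * Complex.I := by ring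
      rw [this, Complex.norm_add_mul_I, ht]
      rw [show sR ^ 2 + (1 - sR ^ 2) = 1 by ring, Real.sqrt_one]
    · rw [h, hwval]
      have : ((sR : ℝ) : ℂ) - Complex.I * ((Real.sqrt (1 - sR ^ 2) : ℝ) : ℂ)
          = ((sR : ℝ) : ℂ) + ((-Real.sqrt (1 - sR ^ 2) : ℝ) : ℂ) * Complex.I := by
        push_cast; ring
      rw [this, Complex.norm_add_mul_I, neg_pow, ht]
      rw [show sR ^ 2 + (-1 : ℝ) ^ 2 * (1 - sR ^ 2) = 1 by ring, Real.sqrt_one]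
  have habs_gt : ¬ α ≤ 2 → ∃ μ ∈ spectrum ℂ Jc, 1 < ‖μ‖ := by
    intro hle
    push_neg at hle
    have hu4 : 4 < α ^ 2 := by nlinarith
    have hs1 : sR < -1 := by rw [hsRdef]; linarith
    have hwval : w = ((Real.sqrt (sR ^ 2 - 1) : ℝ) : ℂ) := by
      rw [hwdef, if_neg (not_le.mpr hle)]
    refine ⟨((sR : ℝ) : ℂ) - w, ?_, ?_⟩
    · rw [hspec]; exact Set.mem_insert_iff.mpr (Or.inr rfl)
    · rw [hwval]
      have : ((sR : ℝ) : ℂ) - ((Real.sqrt (sR ^ 2 - 1) : ℝ) : ℂ)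
          = (((sR - Real.sqrt (sR ^ 2 - 1)) : ℝ) : ℂ) := by push_cast; ring
      rw [this, Complex.norm_real, Real.norm_eq_abs]
      have hsq0 : 0 ≤ Real.sqrt (sR ^ 2 - 1) := Real.sqrt_nonneg _
      rw [lt_abs]
      right
      linarith
  refine ⟨part1, part2, ⟨w, by rw [hsC]; exact hw, by rw [hsC]; exact hspec,
    by rw [hsC]; exact hprod⟩, ?_, ?_⟩
  · constructor
    · intro hall
      by_contra hgt
      rw [hiff] at hgt
      obtain ⟨μ, hμm, hμ⟩ := habs_gt hgt
      have := hall μ hμm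
      linarith
    · intro hle
      exact habs_le (hiff.mp hle)
  · intro hgt
    rw [hiff] at hgt
    exact habs_gt hgt
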